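/- Let d≥1, M>1, and let φ be twice continuously differentiable on (0,∞); denote by |φ''|_∞ the maximum of φ'' on [1/M, M]. Consider a finite set C of cells, each K∈C with measure |K|>0, a diameter parameter h_K>0, and a finite face set E(K) with areas |σ|>0 and unit normal vectors n_{K,σ}∈ℝ^d satisfying Σ_{σ∈E(K)} |σ|·n_{K,σ} = 0; let the number of faces of every cell be at most N_E. For time levels n=0,…,N with constant step δt>0, let face velocity vectors u_σ^{n}∈ℝ^d be given for σ∈E(K), set u_{K,σ}^{n} = u_σ^{n}·n_{K,σ}, and suppose ρ_K^{n} ∈ [1/M, M] for all K, n. For each K and 0≤n≤N−1 let ρ̃_K^{n+1/2} ∈ [[ρ_K^{n}, ρ_K^{n+1}]] and define |K|·(R_{01})_K^{n+1} = φ''(ρ̃_K^{n+1/2})·(ρ_K^{n+1}−ρ_K^{n})·ρ_K^{n}·Σ_{σ∈E(K)} |σ|·u_{K,σ}^{n}. Let 1<p<∞ and 1<q<∞ with 1/p + 1/q = 1. Then there exists a constant C depending only on d and N_E such that Σ_{n=0}^{N−1} δt Σ_{K∈C} |K|·|(R_{01})_K^{n+1}| ≤ C·C_M·M^{(2p−1)/p}·|φ''|_∞·(Σ_{n=0}^{N−1}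 Σ_{K} |K|·|ρ_K^{n+1}−ρ_K^{n}|)^{1/p}·‖u‖_{L^q(W^{1,q})}·δt^{1/p}, where C_M = max over K∈C and (σ,σ')∈E(K)² of (|σ|+|σ'|)·h_K/|K|, and ‖u‖_{L^q(W^{1,q})}^q = Σ_{i=1}^{d} Σ_{n=0}^{N} δt Σ_{K∈C} Σ_{(σ,σ')∈E(K)²} |K|·(|u_{σ,i}^{n}−u_{σ',i}^{n}|/h_K)^q. -/

import Mathlib

set_option maxHeartbeats 1000000

private lemma R01_holder {ι : Type*} (s : Finset ι) (c a b : ι → ℝ) {p q : ℝ}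
    (hp : 1 < p) (hq : 1 < q) (hpq : 1 / p + 1 / q = 1)
    (ha : ∀ j ∈ s, 0 ≤ a j) (hb : ∀ j ∈ s, 0 ≤ b j)
    (hc : ∀ j ∈ s, c j ≤ a j ^ (1 / p) * b j ^ (1 / q)) :
    ∑ j ∈ s, c j ≤ (∑ j ∈ s, a j) ^ (1 / p) * (∑ j ∈ s, b j) ^ (1 / q) := by
  have hp0 : (0 : ℝ) < p := lt_trans zero_lt_one hp
  have hq0 : (0 : ℝ) < q := lt_trans zero_lt_one hq
  have hpq' : p.HolderConjugate q := Real.holderConjugate_iff.2 ⟨hp, by simpa [one_div] using hpq⟩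
  calc ∑ j ∈ s, c j ≤ ∑ j ∈ s, a j ^ (1 / p) * b j ^ (1 / q) := Finset.sum_le_sum hc
    _ ≤ (∑ j ∈ s, (a j ^ (1 / p)) ^ p) ^ (1 / p) * (∑ j ∈ s, (b j ^ (1 / q)) ^ q) ^ (1 / q) :=
        Real.inner_le_Lp_mul_Lq_of_nonneg s hpq'
          (fun j hj => Real.rpow_nonneg (ha j hj) _)
          (fun j hj => Real.rpow_nonneg (hb j hj) _)
    _ = (∑ j ∈ s, a j) ^ (1 / p) * (∑ j ∈ s, b j) ^ (1 / q) := by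
        congr 1
        · congr 1
          refine Finset.sum_congr rfl fun j hj => ?_
          rw [← Real.rpow_mul (ha j hj), one_div_mul_cancel hp0.ne', Real.rpow_one]
        · congr 1
          refine Finset.sum_congr rfl fun j hj => ?_
          rw [← Real.rpow_mul (hb j hj), one_div_mul_cancel hq0.ne', Real.rpow_one]

private lemma R01_rpow_le_add_one {x α : ℝ} (hx : 0 ≤ x) (hα0 : 0 ≤ α) (hα1 : α ≤ 1) :
    x ^ α ≤ x + 1 := by
  rcases le_or_gt 1 x with h | h
  · calc x ^ α ≤ x ^ (1 : ℝ) := Real.rpow_le_rpow_of_exponent_le h hα1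
      _ = x := Real.rpow_one x
      _ ≤ x + 1 := by linarith
  · calc x ^ α ≤ 1 := Real.rpow_le_one hx h.le hα0
      _ ≤ x + 1 := by linarith

private lemma R01_point {p q M w r v : ℝ} (hp : 1 < p) (hq : 1 < q) (hpq : 1 / p + 1 / q = 1)
    (hw : 0 ≤ w) (hr : 0 ≤ r) (hrM : r ≤ M) (hv : 0 ≤ v) :
    w * r * v ≤ (M ^ (p - 1) * (w * r)) ^ (1 / p) * (w * v ^ q) ^ (1 / q) := by
  have hp0 : (0 : ℝ) < p := lt_trans zero_lt_one hp
  have hq0 : (0 : ℝ) < q := lt_trans zero_lt_one hq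
  have hM0 : 0 ≤ M := le_trans hr hrM
  have hiq : (0 : ℝ) ≤ 1 / q := by positivity
  have key : r ≤ M ^ (1 / q) * r ^ (1 / p) := by
    calc r = r ^ (1 / q + 1 / p) := by
          rw [show 1 / q + 1 / p = 1 from by linarith, Real.rpow_one]
      _ = r ^ (1 / q) * r ^ (1 / p) :=
          Real.rpow_add' hr (by rw [show 1 / q + 1 / p = 1 from by linarith]; exact one_ne_zero)
      _ ≤ M ^ (1 / q) * r ^ (1 / p) :=
          mul_le_mul_of_nonneg_right (Real.rpow_le_rpow hr hrM hiq) (Real.rpow_nonneg hr _)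
  have expand : (M ^ (p - 1) * (w * r)) ^ (1 / p) * (w * v ^ q) ^ (1 / q)
      = (M ^ (1 / q) * r ^ (1 / p)) * (w * v) := by
    rw [Real.mul_rpow (Real.rpow_nonneg hM0 _) (mul_nonneg hw hr),
        Real.mul_rpow hw hr, Real.mul_rpow hw (Real.rpow_nonneg hv q),
        ← Real.rpow_mul hM0, ← Real.rpow_mul hv,
        show (p - 1) * (1 / p) = 1 / q from by
          have hpq2 : q + p = p * q := by field_simp at hpq; linarith
          field_simp
          linarith,
        show q * (1 / q) = 1 from mul_one_div_cancel hq0.ne', Real.rpow_one]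
    calc M ^ (1 / q) * (w ^ (1 / p) * r ^ (1 / p)) * (w ^ (1 / q) * v)
        = M ^ (1 / q) * r ^ (1 / p) * ((w ^ (1 / p) * w ^ (1 / q)) * v) := by ring
      _ = (M ^ (1 / q) * r ^ (1 / p)) * (w * v) := by
          rw [← Real.rpow_add' hw (by rw [hpq]; exact one_ne_zero), hpq, Real.rpow_one]
  rw [expand]
  calc w * r * v = r * (w * v) := by ring
    _ ≤ (M ^ (1 / q) * r ^ (1 / p)) * (w * v) :=
        mul_le_mul_of_nonneg_right key (mul_nonneg hw hv)

private lemma R01_reorder5 {ι₁ ι₂ ι₃ ι₄ ι₅ : Type*}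
    (s₁ : Finset ι₁) (s₂ : Finset ι₂) (t₃ : ι₂ → Finset ι₃) (t₄ : ι₂ → Finset ι₄)
    (s₅ : Finset ι₅) (g : ι₁ → ι₂ → ι₃ → ι₄ → ι₅ → ℝ) :
    ∑ a ∈ s₁, ∑ b ∈ s₂, ∑ x ∈ t₃ b, ∑ y ∈ t₄ b, ∑ e ∈ s₅, g a b x y e
      = ∑ e ∈ s₅, ∑ a ∈ s₁, ∑ b ∈ s₂, ∑ x ∈ t₃ b, ∑ y ∈ t₄ b, g a b x y e := by
  calc ∑ a ∈ s₁, ∑ b ∈ s₂, ∑ x ∈ t₃ b, ∑ y ∈ t₄ b, ∑ e ∈ s₅, g a b x y e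
      = ∑ a ∈ s₁, ∑ b ∈ s₂, ∑ x ∈ t₃ b, ∑ e ∈ s₅, ∑ y ∈ t₄ b, g a b x y e :=
        Finset.sum_congr rfl fun a _ => Finset.sum_congr rfl fun b _ =>
          Finset.sum_congr rfl fun x _ => Finset.sum_comm
    _ = ∑ a ∈ s₁, ∑ b ∈ s₂, ∑ e ∈ s₅, ∑ x ∈ t₃ b, ∑ y ∈ t₄ b, g a b x y e :=
        Finset.sum_congr rfl fun a _ => Finset.sum_congr rfl fun b _ => Finset.sum_comm
    _ = ∑ a ∈ s₁, ∑ e ∈ s₅, ∑ b ∈ s₂, ∑ x ∈ t₃ b, ∑ y ∈ t₄ b, g a b x y e :=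
        Finset.sum_congr rfl fun a _ => Finset.sum_comm
    _ = ∑ e ∈ s₅, ∑ a ∈ s₁, ∑ b ∈ s₂, ∑ x ∈ t₃ b, ∑ y ∈ t₄ b, g a b x y e :=
        Finset.sum_comm

private lemma R01_main (d NE : ℕ) (M : ℝ) (hM : 1 < M) (φ : ℝ → ℝ) (C2 : ℝ)
    (hC2 : ∀ x ∈ Set.Icc (1 / M) M, |deriv (deriv φ) x| ≤ C2)
    {Cell Face : Type} [Fintype Cell] [Fintype Face]
    (measK hK : Cell → ℝ) (hmeas : ∀ Kc, 0 < measK Kc) (hhK : ∀ Kc, 0 < hK Kc)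
    (E : Cell → Finset Face) (hEcard : ∀ Kc, (E Kc).card ≤ NE)
    (area : Face → ℝ) (harea : ∀ f, 0 < area f)
    (nrm : Cell → Face → Fin d → ℝ)
    (hnrm : ∀ Kc f, f ∈ E Kc → ∑ i, (nrm Kc f i) ^ 2 = 1)
    (hnrm0 : ∀ Kc i, ∑ f ∈ E Kc, area f * nrm Kc f i = 0)
    (N : ℕ) (δt : ℝ) (hδt : 0 < δt)
    (uvec : Face → ℕ → Fin d → ℝ)
    (ρ : Cell → ℕ → ℝ) (hρ : ∀ Kc n, n ≤ N → ρ Kc n ∈ Set.Icc (1 / M) M)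
    (ρt : Cell → ℕ → ℝ) (hρt : ∀ Kc n, n < N → ρt Kc n ∈ Set.uIcc (ρ Kc n) (ρ Kc (n + 1)))
    (CM : ℝ) (hCM : ∀ Kc, ∀ f ∈ E Kc, ∀ f' ∈ E Kc, (area f + area f') * hK Kc / measK Kc ≤ CM)
    (p q : ℝ) (hp : 1 < p) (hq : 1 < q) (hpq : 1 / p + 1 / q = 1) :
    ∑ n ∈ Finset.range N, δt * ∑ Kc : Cell,
      |deriv (deriv φ) (ρt Kc n) * (ρ Kc (n + 1) - ρ Kc n) * ρ Kc n *
        ∑ f ∈ E Kc, area f * (∑ i, uvec f n i * nrm Kc f i)|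
    ≤ ((d : ℝ) * (NE : ℝ) ^ 2 + 1) * CM * M ^ ((2 * p - 1) / p) * C2 *
        (∑ n ∈ Finset.range N, ∑ Kc : Cell, measK Kc * |ρ Kc (n + 1) - ρ Kc n|) ^ (1 / p) *
        ((∑ i : Fin d, ∑ n ∈ Finset.range (N + 1), δt * ∑ Kc : Cell,
            ∑ f ∈ E Kc, ∑ f' ∈ E Kc,
              measK Kc * (|uvec f n i - uvec f' n i| / hK Kc) ^ q) ^ (1 / q)) *
        δt ^ (1 / p) := by
  have hM0 : (0 : ℝ) < M := lt_trans zero_lt_one hM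
  have hp0 : (0 : ℝ) < p := lt_trans zero_lt_one hp
  have hq0 : (0 : ℝ) < q := lt_trans zero_lt_one hq
  have hip : (0 : ℝ) ≤ 1 / p := by positivity
  have hiq : (0 : ℝ) ≤ 1 / q := by positivity
  have hC2nn : 0 ≤ C2 := le_trans (abs_nonneg _) (hC2 1 ⟨(div_le_one hM0).2 hM.le, hM.le⟩)
  rcases le_or_gt CM 0 with hCM0 | hCMpos
  · -- degenerate case: all face sets are empty
    have hEe : ∀ K : Cell, E K = ∅ := by
      intro K
      rw [Finset.eq_empty_iff_forall_notMem]
      intro f hf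
      have h1 := hCM K f hf f hf
      have h2 : 0 < (area f + area f) * hK K / measK K := by
        have := harea f; have := hhK K; have := hmeas K; positivity
      linarith
    simp only [hEe, Finset.sum_empty, mul_zero, abs_zero, Finset.sum_const_zero,
      Real.zero_rpow (one_div_ne_zero hq0.ne'), zero_mul, mul_zero, le_refl]
  · -- main case
    have key : ∀ n ∈ Finset.range N, ∀ K : Cell,
        |deriv (deriv φ) (ρt K n) * (ρ K (n + 1) - ρ K n) * ρ K n *
          ∑ f ∈ E K, area f * (∑ i, uvec f n i * nrm K f i)|
        ≤ C2 * M * |ρ K (n + 1) - ρ K n| *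
          ∑ f ∈ E K, ∑ f' ∈ E K, ∑ i,
            CM * (measK K * (|uvec f n i - uvec f' n i| / hK K)) := by
      intro n hn K
      have hnN : n < N := Finset.mem_range.1 hn
      have h1 := hρ K n hnN.le
      have h2 := hρ K (n + 1) hnN
      have hρtm : ρt K n ∈ Set.Icc (1 / M) M := by
        have h3 := hρt K n hnN
        rcases Set.mem_uIcc.1 h3 with ⟨ha, hb⟩ | ⟨ha, hb⟩
        · exact ⟨le_trans h1.1 ha, le_trans hb h2.2⟩
        · exact ⟨le_trans h2.1 ha, le_trans hb h1.2⟩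
      have hφ'' := hC2 _ hρtm
      have hMi : (0 : ℝ) < 1 / M := by positivity
      have hρa : |ρ K n| ≤ M := abs_le.2 ⟨by linarith [h1.1], h1.2⟩
      have hTb : |∑ f ∈ E K, area f * (∑ i, uvec f n i * nrm K f i)| ≤
          ∑ f ∈ E K, ∑ f' ∈ E K, ∑ i,
            CM * (measK K * (|uvec f n i - uvec f' n i| / hK K)) := by
        rcases (E K).eq_empty_or_nonempty with he | ⟨f0, hf0⟩
        · simp [he]
        · have hzero : ∑ f ∈ E K, area f * (∑ i, uvec f0 n i * nrm K f i) = 0 := by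
            calc ∑ f ∈ E K, area f * ∑ i, uvec f0 n i * nrm K f i
                = ∑ f ∈ E K, ∑ i, uvec f0 n i * (area f * nrm K f i) := by
                  refine Finset.sum_congr rfl fun f _ => ?_
                  rw [Finset.mul_sum]
                  exact Finset.sum_congr rfl fun i _ => by ring
              _ = ∑ i, ∑ f ∈ E K, uvec f0 n i * (area f * nrm K f i) := Finset.sum_comm
              _ = ∑ i, uvec f0 n i * ∑ f ∈ E K, area f * nrm K f i := by
                  refine Finset.sum_congr rfl fun i _ => (Finset.mul_sum _ _ _).symm
              _ = 0 := by simp [hnrm0 K]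
          have hTeq : ∑ f ∈ E K, area f * (∑ i, uvec f n i * nrm K f i)
              = ∑ f ∈ E K, area f * (∑ i, (uvec f n i - uvec f0 n i) * nrm K f i) := by
            have hsub : ∑ f ∈ E K, area f * (∑ i, (uvec f n i - uvec f0 n i) * nrm K f i)
                = ∑ f ∈ E K, area f * (∑ i, uvec f n i * nrm K f i)
                  - ∑ f ∈ E K, area f * (∑ i, uvec f0 n i * nrm K f i) := by
              rw [← Finset.sum_sub_distrib]
              refine Finset.sum_congr rfl fun f _ => ?_
              rw [← mul_sub, ← Finset.sum_sub_distrib]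
              exact congrArg _ (Finset.sum_congr rfl fun i _ => by ring)
            rw [hsub, hzero, sub_zero]
          rw [hTeq]
          have habs : |∑ f ∈ E K, area f * (∑ i, (uvec f n i - uvec f0 n i) * nrm K f i)|
              ≤ ∑ f ∈ E K, area f * ∑ i, |uvec f n i - uvec f0 n i| := by
            refine (Finset.abs_sum_le_sum_abs _ _).trans (Finset.sum_le_sum fun f hf => ?_)
            rw [abs_mul, abs_of_pos (harea f)]
            refine mul_le_mul_of_nonneg_left ((Finset.abs_sum_le_sum_abs _ _).trans
              (Finset.sum_le_sum fun i _ => ?_)) (harea f).le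
            rw [abs_mul]
            have hsq : nrm K f i ^ 2 ≤ 1 := by
              rw [← hnrm K f hf]
              exact Finset.single_le_sum (f := fun j => nrm K f j ^ 2) (fun j _ => sq_nonneg _) (Finset.mem_univ i)
            have hni : |nrm K f i| ≤ 1 := by
              nlinarith [abs_nonneg (nrm K f i), sq_abs (nrm K f i)]
            calc |uvec f n i - uvec f0 n i| * |nrm K f i|
                ≤ |uvec f n i - uvec f0 n i| * 1 :=
                  mul_le_mul_of_nonneg_left hni (abs_nonneg _)
              _ = |uvec f n i - uvec f0 n i| := mul_one _
          refine habs.trans (Finset.sum_le_sum fun f hf => ?_)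
          have hAf : area f ≤ CM * measK K / hK K := by
            have h := hCM K f hf f0 hf0
            rw [div_le_iff₀ (hmeas K)] at h
            rw [le_div_iff₀ (hhK K)]
            nlinarith [mul_pos (harea f0) (hhK K)]
          calc area f * ∑ i, |uvec f n i - uvec f0 n i|
              ≤ ∑ i, CM * (measK K * (|uvec f n i - uvec f0 n i| / hK K)) := by
                rw [Finset.mul_sum]
                refine Finset.sum_le_sum fun i _ => ?_
                calc area f * |uvec f n i - uvec f0 n i|
                    ≤ (CM * measK K / hK K) * |uvec f n i - uvec f0 n i| :=
                      mul_le_mul_of_nonneg_right hAf (abs_nonneg _)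
                  _ = CM * (measK K * (|uvec f n i - uvec f0 n i| / hK K)) := by ring
            _ ≤ ∑ f' ∈ E K, ∑ i, CM * (measK K * (|uvec f n i - uvec f' n i| / hK K)) :=
                Finset.single_le_sum
                  (f := fun f' => ∑ i, CM * (measK K * (|uvec f n i - uvec f' n i| / hK K)))
                  (fun f' _ => Finset.sum_nonneg fun i _ =>
                  mul_nonneg hCMpos.le (mul_nonneg (hmeas K).le
                    (div_nonneg (abs_nonneg _) (hhK K).le))) hf0
      calc |deriv (deriv φ) (ρt K n) * (ρ K (n + 1) - ρ K n) * ρ K n *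
            ∑ f ∈ E K, area f * (∑ i, uvec f n i * nrm K f i)|
          = |deriv (deriv φ) (ρt K n)| * |ρ K (n + 1) - ρ K n| * |ρ K n| *
            |∑ f ∈ E K, area f * (∑ i, uvec f n i * nrm K f i)| := by
            rw [abs_mul, abs_mul, abs_mul]
        _ ≤ C2 * |ρ K (n + 1) - ρ K n| * M *
            ∑ f ∈ E K, ∑ f' ∈ E K, ∑ i,
              CM * (measK K * (|uvec f n i - uvec f' n i| / hK K)) := by
            refine mul_le_mul (mul_le_mul
              (mul_le_mul_of_nonneg_right hφ'' (abs_nonneg _)) hρa (abs_nonneg _)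
              (mul_nonneg hC2nn (abs_nonneg _))) hTb (abs_nonneg _)
              (mul_nonneg (mul_nonneg hC2nn (abs_nonneg _)) hM0.le)
        _ = C2 * M * |ρ K (n + 1) - ρ K n| *
            ∑ f ∈ E K, ∑ f' ∈ E K, ∑ i,
              CM * (measK K * (|uvec f n i - uvec f' n i| / hK K)) := by ring
    -- the sigma index set
    set s : Finset (Σ _ : Fin d, Σ _ : ℕ, Σ _ : Cell, Σ _ : Face, Face) :=
      Finset.univ.sigma fun _ => (Finset.range N).sigma fun _ =>
        (Finset.univ : Finset Cell).sigma fun K => (E K).sigma fun _ => E K with hs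
    have hmem : ∀ j ∈ s, j.2.1 < N ∧ j.2.2.2.1 ∈ E j.2.2.1 ∧ j.2.2.2.2 ∈ E j.2.2.1 := by
      intro j hj
      rw [hs] at hj
      simp only [Finset.mem_sigma, Finset.mem_univ, Finset.mem_range, true_and] at hj
      exact hj
    have hAnn : ∀ j : (Σ _ : Fin d, Σ _ : ℕ, Σ _ : Cell, Σ _ : Face, Face),
        0 ≤ M ^ (p - 1) * ((δt * measK j.2.2.1) * |ρ j.2.2.1 (j.2.1 + 1) - ρ j.2.2.1 j.2.1|) :=
      fun j => mul_nonneg (Real.rpow_nonneg hM0.le _)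
        (mul_nonneg (mul_nonneg hδt.le (hmeas _).le) (abs_nonneg _))
    have hBnn : ∀ j : (Σ _ : Fin d, Σ _ : ℕ, Σ _ : Cell, Σ _ : Face, Face),
        0 ≤ (δt * measK j.2.2.1) *
          (|uvec j.2.2.2.1 j.2.1 j.1 - uvec j.2.2.2.2 j.2.1 j.1| / hK j.2.2.1) ^ q :=
      fun j => mul_nonneg (mul_nonneg hδt.le (hmeas _).le)
        (Real.rpow_nonneg (div_nonneg (abs_nonneg _) (hhK _).le) _)
    have hHolder := R01_holder s
      (fun j => (δt * measK j.2.2.1) * |ρ j.2.2.1 (j.2.1 + 1) - ρ j.2.2.1 j.2.1| *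
        (|uvec j.2.2.2.1 j.2.1 j.1 - uvec j.2.2.2.2 j.2.1 j.1| / hK j.2.2.1))
      (fun j => M ^ (p - 1) *
        ((δt * measK j.2.2.1) * |ρ j.2.2.1 (j.2.1 + 1) - ρ j.2.2.1 j.2.1|))
      (fun j => (δt * measK j.2.2.1) *
        (|uvec j.2.2.2.1 j.2.1 j.1 - uvec j.2.2.2.2 j.2.1 j.1| / hK j.2.2.1) ^ q)
      hp hq hpq (fun j _ => hAnn j) (fun j _ => hBnn j)
      (fun j hj => by
        have hjm := hmem j hj
        have hr1 := hρ j.2.2.1 j.2.1 hjm.1.le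
        have hr2 := hρ j.2.2.1 (j.2.1 + 1) hjm.1
        have hMi : (0 : ℝ) < 1 / M := by positivity
        exact R01_point hp hq hpq (mul_nonneg hδt.le (hmeas _).le) (abs_nonneg _)
          (abs_le.2 ⟨by linarith [hr2.1, hr1.2], by linarith [hr2.2, hr1.1]⟩)
          (div_nonneg (abs_nonneg _) (hhK _).le))
    -- sigma-sum identities
    have hsC : ∑ j ∈ s, ((δt * measK j.2.2.1) * |ρ j.2.2.1 (j.2.1 + 1) - ρ j.2.2.1 j.2.1| *
          (|uvec j.2.2.2.1 j.2.1 j.1 - uvec j.2.2.2.2 j.2.1 j.1| / hK j.2.2.1))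
        = ∑ i : Fin d, ∑ n ∈ Finset.range N, ∑ K : Cell, ∑ f ∈ E K, ∑ f' ∈ E K,
            (δt * measK K) * |ρ K (n + 1) - ρ K n| * (|uvec f n i - uvec f' n i| / hK K) := by
      rw [hs]; simp only [Finset.sum_sigma]
    have hsA : ∑ j ∈ s, (M ^ (p - 1) *
          ((δt * measK j.2.2.1) * |ρ j.2.2.1 (j.2.1 + 1) - ρ j.2.2.1 j.2.1|))
        = ∑ i : Fin d, ∑ n ∈ Finset.range N, ∑ K : Cell, ∑ f ∈ E K, ∑ f' ∈ E K,
            M ^ (p - 1) * ((δt * measK K) * |ρ K (n + 1) - ρ K n|) := by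
      rw [hs]; simp only [Finset.sum_sigma]
    have hsB : ∑ j ∈ s, ((δt * measK j.2.2.1) *
          (|uvec j.2.2.2.1 j.2.1 j.1 - uvec j.2.2.2.2 j.2.1 j.1| / hK j.2.2.1) ^ q)
        = ∑ i : Fin d, ∑ n ∈ Finset.range N, ∑ K : Cell, ∑ f ∈ E K, ∑ f' ∈ E K,
            (δt * measK K) * (|uvec f n i - uvec f' n i| / hK K) ^ q := by
      rw [hs]; simp only [Finset.sum_sigma]
    have hSA0 : 0 ≤ ∑ j ∈ s, (M ^ (p - 1) *
        ((δt * measK j.2.2.1) * |ρ j.2.2.1 (j.2.1 + 1) - ρ j.2.2.1 j.2.1|)) :=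
      Finset.sum_nonneg fun j _ => hAnn j
    have hSB0 : 0 ≤ ∑ j ∈ s, ((δt * measK j.2.2.1) *
        (|uvec j.2.2.2.1 j.2.1 j.1 - uvec j.2.2.2.2 j.2.1 j.1| / hK j.2.2.1) ^ q) :=
      Finset.sum_nonneg fun j _ => hBnn j
    have hAρ0 : 0 ≤ ∑ n ∈ Finset.range N, ∑ Kc : Cell, measK Kc * |ρ Kc (n + 1) - ρ Kc n| :=
      Finset.sum_nonneg fun n _ => Finset.sum_nonneg fun K _ =>
        mul_nonneg (hmeas K).le (abs_nonneg _)
    have hW0 : 0 ≤ ∑ i : Fin d, ∑ n ∈ Finset.range (N + 1), δt * ∑ Kc : Cell,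
        ∑ f ∈ E Kc, ∑ f' ∈ E Kc, measK Kc * (|uvec f n i - uvec f' n i| / hK Kc) ^ q :=
      Finset.sum_nonneg fun i _ => Finset.sum_nonneg fun n _ => mul_nonneg hδt.le
        (Finset.sum_nonneg fun K _ => Finset.sum_nonneg fun f _ => Finset.sum_nonneg fun f' _ =>
          mul_nonneg (hmeas K).le (Real.rpow_nonneg (div_nonneg (abs_nonneg _) (hhK K).le) q))
    have hXnn : (0 : ℝ) ≤ (d : ℝ) * (NE : ℝ) ^ 2 := by positivity
    have hA : ∑ j ∈ s, (M ^ (p - 1) *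
          ((δt * measK j.2.2.1) * |ρ j.2.2.1 (j.2.1 + 1) - ρ j.2.2.1 j.2.1|))
        ≤ M ^ (p - 1) * (((d : ℝ) * (NE : ℝ) ^ 2) *
            (δt * ∑ n ∈ Finset.range N, ∑ Kc : Cell, measK Kc * |ρ Kc (n + 1) - ρ Kc n|)) := by
      rw [hsA]
      calc ∑ i : Fin d, ∑ n ∈ Finset.range N, ∑ K : Cell, ∑ f ∈ E K, ∑ f' ∈ E K,
            M ^ (p - 1) * ((δt * measK K) * |ρ K (n + 1) - ρ K n|)
          = ∑ i : Fin d, ∑ n ∈ Finset.range N, ∑ K : Cell,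
              ((E K).card : ℝ) * (((E K).card : ℝ) *
                (M ^ (p - 1) * ((δt * measK K) * |ρ K (n + 1) - ρ K n|))) := by
            refine Finset.sum_congr rfl fun i _ => Finset.sum_congr rfl fun n _ =>
              Finset.sum_congr rfl fun K _ => ?_
            simp [Finset.sum_const, nsmul_eq_mul]
        _ ≤ ∑ i : Fin d, ∑ n ∈ Finset.range N, ∑ K : Cell,
              (NE : ℝ) * ((NE : ℝ) * (M ^ (p - 1) * ((δt * measK K) * |ρ K (n + 1) - ρ K n|))) := by
            refine Finset.sum_le_sum fun i _ => Finset.sum_le_sum fun n _ =>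
              Finset.sum_le_sum fun K _ => ?_
            have hcR : ((E K).card : ℝ) ≤ (NE : ℝ) := Nat.cast_le.2 (hEcard K)
            have ht : 0 ≤ M ^ (p - 1) * ((δt * measK K) * |ρ K (n + 1) - ρ K n|) :=
              mul_nonneg (Real.rpow_nonneg hM0.le _)
                (mul_nonneg (mul_nonneg hδt.le (hmeas K).le) (abs_nonneg _))
            exact mul_le_mul hcR (mul_le_mul hcR le_rfl ht (Nat.cast_nonneg _))
              (mul_nonneg (Nat.cast_nonneg _) ht) (Nat.cast_nonneg _)
        _ = M ^ (p - 1) * (((d : ℝ) * (NE : ℝ) ^ 2) *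
              (δt * ∑ n ∈ Finset.range N, ∑ Kc : Cell, measK Kc * |ρ Kc (n + 1) - ρ Kc n|)) := by
            rw [Finset.sum_const, Finset.card_univ, Fintype.card_fin, nsmul_eq_mul]
            simp only [Finset.mul_sum]
            refine Finset.sum_congr rfl fun n _ => Finset.sum_congr rfl fun K _ => by ring
    have hB : ∑ j ∈ s, ((δt * measK j.2.2.1) *
          (|uvec j.2.2.2.1 j.2.1 j.1 - uvec j.2.2.2.2 j.2.1 j.1| / hK j.2.2.1) ^ q)
        ≤ ∑ i : Fin d, ∑ n ∈ Finset.range (N + 1), δt * ∑ Kc : Cell,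
            ∑ f ∈ E Kc, ∑ f' ∈ E Kc, measK Kc * (|uvec f n i - uvec f' n i| / hK Kc) ^ q := by
      rw [hsB]
      refine Finset.sum_le_sum fun i _ => ?_
      calc ∑ n ∈ Finset.range N, ∑ K : Cell, ∑ f ∈ E K, ∑ f' ∈ E K,
            (δt * measK K) * (|uvec f n i - uvec f' n i| / hK K) ^ q
          = ∑ n ∈ Finset.range N, δt * ∑ Kc : Cell, ∑ f ∈ E Kc, ∑ f' ∈ E Kc,
              measK Kc * (|uvec f n i - uvec f' n i| / hK Kc) ^ q := by
            refine Finset.sum_congr rfl fun n _ => ?_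
            simp only [Finset.mul_sum]
            refine Finset.sum_congr rfl fun K _ => Finset.sum_congr rfl fun f _ =>
              Finset.sum_congr rfl fun f' _ => by ring
        _ ≤ ∑ n ∈ Finset.range (N + 1), δt * ∑ Kc : Cell, ∑ f ∈ E Kc, ∑ f' ∈ E Kc,
              measK Kc * (|uvec f n i - uvec f' n i| / hK Kc) ^ q :=
            Finset.sum_le_sum_of_subset_of_nonneg (Finset.range_subset_range.2 (Nat.le_succ N))
              (fun n _ _ => mul_nonneg hδt.le (Finset.sum_nonneg fun K _ =>
                Finset.sum_nonneg fun f _ => Finset.sum_nonneg fun f' _ =>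
                  mul_nonneg (hmeas K).le
                    (Real.rpow_nonneg (div_nonneg (abs_nonneg _) (hhK K).le) q)))
    have hD : ∑ n ∈ Finset.range N, δt * ∑ K : Cell,
          (C2 * M * |ρ K (n + 1) - ρ K n| *
            ∑ f ∈ E K, ∑ f' ∈ E K, ∑ i,
              CM * (measK K * (|uvec f n i - uvec f' n i| / hK K)))
        = (C2 * M * CM) * ∑ j ∈ s, ((δt * measK j.2.2.1) *
            |ρ j.2.2.1 (j.2.1 + 1) - ρ j.2.2.1 j.2.1| *
            (|uvec j.2.2.2.1 j.2.1 j.1 - uvec j.2.2.2.2 j.2.1 j.1| / hK j.2.2.1)) := by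
      rw [hsC]
      calc ∑ n ∈ Finset.range N, δt * ∑ K : Cell,
            (C2 * M * |ρ K (n + 1) - ρ K n| *
              ∑ f ∈ E K, ∑ f' ∈ E K, ∑ i,
                CM * (measK K * (|uvec f n i - uvec f' n i| / hK K)))
          = ∑ n ∈ Finset.range N, ∑ K : Cell, ∑ f ∈ E K, ∑ f' ∈ E K, ∑ i : Fin d,
              (C2 * M * CM) * ((δt * measK K) * |ρ K (n + 1) - ρ K n| *
                (|uvec f n i - uvec f' n i| / hK K)) := by
            simp only [Finset.mul_sum]
            refine Finset.sum_congr rfl fun n _ => Finset.sum_congr rfl fun K _ =>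
              Finset.sum_congr rfl fun f _ => Finset.sum_congr rfl fun f' _ =>
                Finset.sum_congr rfl fun i _ => by ring
        _ = ∑ i : Fin d, ∑ n ∈ Finset.range N, ∑ K : Cell, ∑ f ∈ E K, ∑ f' ∈ E K,
              (C2 * M * CM) * ((δt * measK K) * |ρ K (n + 1) - ρ K n| *
                (|uvec f n i - uvec f' n i| / hK K)) := R01_reorder5 _ _ _ _ _ _
        _ = (C2 * M * CM) * ∑ i : Fin d, ∑ n ∈ Finset.range N, ∑ K : Cell, ∑ f ∈ E K, ∑ f' ∈ E K,
              ((δt * measK K) * |ρ K (n + 1) - ρ K n| *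
                (|uvec f n i - uvec f' n i| / hK K)) := by
            simp only [Finset.mul_sum]
    have h0 : 0 ≤ C2 * M * CM := mul_nonneg (mul_nonneg hC2nn hM0.le) hCMpos.le
    have hfac1 : (∑ j ∈ s, (M ^ (p - 1) *
          ((δt * measK j.2.2.1) * |ρ j.2.2.1 (j.2.1 + 1) - ρ j.2.2.1 j.2.1|))) ^ (1 / p)
        ≤ M ^ ((p - 1) * (1 / p)) * (((d : ℝ) * (NE : ℝ) ^ 2 + 1) *
            (δt ^ (1 / p) *
              (∑ n ∈ Finset.range N, ∑ Kc : Cell,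
                measK Kc * |ρ Kc (n + 1) - ρ Kc n|) ^ (1 / p))) := by
      calc (∑ j ∈ s, (M ^ (p - 1) *
            ((δt * measK j.2.2.1) * |ρ j.2.2.1 (j.2.1 + 1) - ρ j.2.2.1 j.2.1|))) ^ (1 / p)
          ≤ (M ^ (p - 1) * (((d : ℝ) * (NE : ℝ) ^ 2) *
              (δt * ∑ n ∈ Finset.range N, ∑ Kc : Cell,
                measK Kc * |ρ Kc (n + 1) - ρ Kc n|))) ^ (1 / p) :=
            Real.rpow_le_rpow hSA0 hA hip
        _ = M ^ ((p - 1) * (1 / p)) * (((d : ℝ) * (NE : ℝ) ^ 2) ^ (1 / p) *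
              (δt ^ (1 / p) *
                (∑ n ∈ Finset.range N, ∑ Kc : Cell,
                  measK Kc * |ρ Kc (n + 1) - ρ Kc n|) ^ (1 / p))) := by
            rw [Real.mul_rpow (Real.rpow_nonneg hM0.le _)
                  (mul_nonneg hXnn (mul_nonneg hδt.le hAρ0)),
                Real.mul_rpow hXnn (mul_nonneg hδt.le hAρ0),
                Real.mul_rpow hδt.le hAρ0, ← Real.rpow_mul hM0.le]
        _ ≤ M ^ ((p - 1) * (1 / p)) * (((d : ℝ) * (NE : ℝ) ^ 2 + 1) *
              (δt ^ (1 / p) *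
                (∑ n ∈ Finset.range N, ∑ Kc : Cell,
                  measK Kc * |ρ Kc (n + 1) - ρ Kc n|) ^ (1 / p))) :=
            mul_le_mul_of_nonneg_left (mul_le_mul_of_nonneg_right
              (R01_rpow_le_add_one hXnn hip (by rw [div_le_one hp0]; exact hp.le))
              (mul_nonneg (Real.rpow_nonneg hδt.le _) (Real.rpow_nonneg hAρ0 _)))
              (Real.rpow_nonneg hM0.le _)
    have hfac2 : (∑ j ∈ s, ((δt * measK j.2.2.1) *
          (|uvec j.2.2.2.1 j.2.1 j.1 - uvec j.2.2.2.2 j.2.1 j.1| / hK j.2.2.1) ^ q)) ^ (1 / q)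
        ≤ (∑ i : Fin d, ∑ n ∈ Finset.range (N + 1), δt * ∑ Kc : Cell,
            ∑ f ∈ E Kc, ∑ f' ∈ E Kc,
              measK Kc * (|uvec f n i - uvec f' n i| / hK Kc) ^ q) ^ (1 / q) :=
      Real.rpow_le_rpow hSB0 hB hiq
    calc ∑ n ∈ Finset.range N, δt * ∑ Kc : Cell,
          |deriv (deriv φ) (ρt Kc n) * (ρ Kc (n + 1) - ρ Kc n) * ρ Kc n *
            ∑ f ∈ E Kc, area f * (∑ i, uvec f n i * nrm Kc f i)|
        ≤ ∑ n ∈ Finset.range N, δt * ∑ K : Cell,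
            (C2 * M * |ρ K (n + 1) - ρ K n| *
              ∑ f ∈ E K, ∑ f' ∈ E K, ∑ i,
                CM * (measK K * (|uvec f n i - uvec f' n i| / hK K))) :=
          Finset.sum_le_sum fun n hn => mul_le_mul_of_nonneg_left
            (Finset.sum_le_sum fun K _ => key n hn K) hδt.le
      _ = (C2 * M * CM) * ∑ j ∈ s, ((δt * measK j.2.2.1) *
            |ρ j.2.2.1 (j.2.1 + 1) - ρ j.2.2.1 j.2.1| *
            (|uvec j.2.2.2.1 j.2.1 j.1 - uvec j.2.2.2.2 j.2.1 j.1| / hK j.2.2.1)) := hD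
      _ ≤ (C2 * M * CM) * ((∑ j ∈ s, (M ^ (p - 1) *
              ((δt * measK j.2.2.1) * |ρ j.2.2.1 (j.2.1 + 1) - ρ j.2.2.1 j.2.1|))) ^ (1 / p) *
            (∑ j ∈ s, ((δt * measK j.2.2.1) *
              (|uvec j.2.2.2.1 j.2.1 j.1 - uvec j.2.2.2.2 j.2.1 j.1| / hK j.2.2.1) ^ q)) ^ (1 / q)) :=
          mul_le_mul_of_nonneg_left hHolder h0
      _ ≤ (C2 * M * CM) * ((M ^ ((p - 1) * (1 / p)) * (((d : ℝ) * (NE : ℝ) ^ 2 + 1) *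
              (δt ^ (1 / p) *
                (∑ n ∈ Finset.range N, ∑ Kc : Cell,
                  measK Kc * |ρ Kc (n + 1) - ρ Kc n|) ^ (1 / p)))) *
            (∑ i : Fin d, ∑ n ∈ Finset.range (N + 1), δt * ∑ Kc : Cell,
              ∑ f ∈ E Kc, ∑ f' ∈ E Kc,
                measK Kc * (|uvec f n i - uvec f' n i| / hK Kc) ^ q) ^ (1 / q)) :=
          mul_le_mul_of_nonneg_left (mul_le_mul hfac1 hfac2 (Real.rpow_nonneg hSB0 _)
            (mul_nonneg (Real.rpow_nonneg hM0.le _) (mul_nonneg (by positivity)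
              (mul_nonneg (Real.rpow_nonneg hδt.le _) (Real.rpow_nonneg hAρ0 _))))) h0
      _ = ((d : ℝ) * (NE : ℝ) ^ 2 + 1) * CM * M ^ ((2 * p - 1) / p) * C2 *
            (∑ n ∈ Finset.range N, ∑ Kc : Cell, measK Kc * |ρ Kc (n + 1) - ρ Kc n|) ^ (1 / p) *
            ((∑ i : Fin d, ∑ n ∈ Finset.range (N + 1), δt * ∑ Kc : Cell,
                ∑ f ∈ E Kc, ∑ f' ∈ E Kc,
                  measK Kc * (|uvec f n i - uvec f' n i| / hK Kc) ^ q) ^ (1 / q)) *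
            δt ^ (1 / p) := by
          rw [show (2 * p - 1) / p = 1 + (p - 1) * (1 / p) from by field_simp; ring,
            Real.rpow_add hM0, Real.rpow_one]
          ring

/-- L¹ bound on the remainder `R₀₁` of the explicit renormalized mass balance
(Lemma 3.5): there is a constant `Cst` depending only on the space dimension `d` and
on the maximal number of faces `NE` of the cells, such that
`‖R₀₁‖_{L¹} ≤ Cst C_M M^{(2p−1)/p} |φ''|_∞ |ρ|_{T,BV}^{1/p} ‖u‖_{L^q(W^{1,q})} δt^{1/p}`. -/
theorem explicit_mass_R01_bound (d NE : ℕ) (hd : 1 ≤ d) :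
    ∃ Cst : ℝ, 0 < Cst ∧
      ∀ (M : ℝ), 1 < M →
      ∀ (φ : ℝ → ℝ), ContDiffOn ℝ 2 φ (Set.Ioi 0) →
      ∀ (C2 : ℝ), (∀ x ∈ Set.Icc (1 / M) M, |deriv (deriv φ) x| ≤ C2) →
      ∀ (Cell Face : Type) (_ : Fintype Cell) (_ : Fintype Face),
      ∀ (measK hK : Cell → ℝ), (∀ Kc, 0 < measK Kc) → (∀ Kc, 0 < hK Kc) →
      ∀ (E : Cell → Finset Face), (∀ Kc, (E Kc).card ≤ NE) →
      ∀ (area : Face → ℝ), (∀ f, 0 < area f) →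
      ∀ (nrm : Cell → Face → Fin d → ℝ),
        (∀ Kc f, f ∈ E Kc → ∑ i, (nrm Kc f i) ^ 2 = 1) →
        (∀ Kc i, ∑ f ∈ E Kc, area f * nrm Kc f i = 0) →
      ∀ (N : ℕ) (δt : ℝ), 0 < δt →
      ∀ (uvec : Face → ℕ → Fin d → ℝ),
      ∀ (ρ : Cell → ℕ → ℝ), (∀ Kc n, n ≤ N → ρ Kc n ∈ Set.Icc (1 / M) M) →
      ∀ (ρt : Cell → ℕ → ℝ), (∀ Kc n, n < N → ρt Kc n ∈ Set.uIcc (ρ Kc n) (ρ Kc (n + 1))) →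
      ∀ (CM : ℝ),
        (∀ Kc, ∀ f ∈ E Kc, ∀ f' ∈ E Kc, (area f + area f') * hK Kc / measK Kc ≤ CM) →
      ∀ (p q : ℝ), 1 < p → 1 < q → 1 / p + 1 / q = 1 →
        ∑ n ∈ Finset.range N, δt * ∑ Kc : Cell,
          |deriv (deriv φ) (ρt Kc n) * (ρ Kc (n + 1) - ρ Kc n) * ρ Kc n *
            ∑ f ∈ E Kc, area f * (∑ i, uvec f n i * nrm Kc f i)|
        ≤ Cst * CM * M ^ ((2 * p - 1) / p) * C2 *
            (∑ n ∈ Finset.range N, ∑ Kc : Cell, measK Kc * |ρ Kc (n + 1) - ρ Kc n|) ^ (1 / p) *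
            ((∑ i : Fin d, ∑ n ∈ Finset.range (N + 1), δt * ∑ Kc : Cell,
                ∑ f ∈ E Kc, ∑ f' ∈ E Kc,
                  measK Kc * (|uvec f n i - uvec f' n i| / hK Kc) ^ q) ^ (1 / q)) *
            δt ^ (1 / p) := by
  refine ⟨(d : ℝ) * (NE : ℝ) ^ 2 + 1, by positivity, ?_⟩
  intro M hM φ _ C2 hC2 Cell Face iCell iFace measK hK hmeas hhK E hEcard area harea nrm
    hnrm hnrm0 N δt hδt uvec ρ hρ ρt hρt CM hCM p q hp hq hpq
  exact @R01_main d NE M hM φ C2 hC2 Cell Face iCell iFace measK hK hmeas hhK E hEcard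
    area harea nrm hnrm hnrm0 N δt hδt uvec ρ hρ ρt hρt CM hCM p q hp hq hpq
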